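/- Let a, b, c be real numbers with a ≥ 1, b ≥ a, c > 1, set 𝒜 = (a+1/a)/2, ℬ = (b+1/b)/2, 𝒞 = (c−1/c)/2, and assume 𝒞² ≤ (𝒜−ℬ)²/(4𝒜ℬ). Set â = 1 − 𝒜ℬ + 𝒞² and let y, z : ℝ → ℝ be twice differentiable functions satisfying the Wente ODE system with parameter â together with the initial conditions y(0) = z(0) = 0, y'(0) = (𝒜+ℬ)𝒞/2, z'(0) = (ℬ−𝒜)·√(𝒞²+1)/2. Then there exists ε > 0 such that y(u) < z(u) for every u ∈ (0,ε). -/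

import Mathlib

open Filter Set

/-- If `f 0 = 0` and `f` has a positive derivative at `0`, then `f > 0` just to the right. -/
lemma aux_pos_right (f : ℝ → ℝ) (hf0 : f 0 = 0) {d : ℝ} (hd : 0 < d)
    (h : HasDerivAt f d 0) : ∃ ε > (0:ℝ), ∀ u : ℝ, 0 < u → u < ε → 0 < f u := by
  have h2 := hasDerivAt_iff_tendsto_slope.mp h
  have h3 : ∀ᶠ u in nhdsWithin (0:ℝ) {(0:ℝ)}ᶜ, 0 < slope f 0 u :=
    h2.eventually (eventually_gt_nhds hd)
  have h4 : ∀ᶠ u in nhdsWithin (0:ℝ) (Set.Ioi 0), 0 < slope f 0 u :=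
    h3.filter_mono (nhdsWithin_mono 0 (fun x hx => hx.ne'))
  obtain ⟨ε, hε, hsub⟩ := mem_nhdsGT_iff_exists_Ioo_subset.mp h4
  refine ⟨ε, hε, fun u hu1 hu2 => ?_⟩
  have h5 : 0 < slope f 0 u := hsub ⟨hu1, hu2⟩
  rw [slope_def_field, hf0, sub_zero, sub_zero] at h5
  have h6 := mul_pos h5 hu1
  rwa [div_mul_cancel₀ _ hu1.ne'] at h6

/-- If `f 0 = 0`, `f` is differentiable and `deriv f > 0` on `(0, ε)`, then `f > 0` there. -/
lemma aux_pos_of_deriv_pos (f : ℝ → ℝ) (hf : ∀ u, DifferentiableAt ℝ f u) (hf0 : f 0 = 0)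
    (ε : ℝ) (hε : 0 < ε) (hd : ∀ u : ℝ, 0 < u → u < ε → 0 < deriv f u) :
    ∀ u : ℝ, 0 < u → u < ε → 0 < f u := by
  have hmono : StrictMonoOn f (Set.Ico 0 ε) := by
    apply strictMonoOn_of_deriv_pos (convex_Ico 0 ε)
      (fun u _ => (hf u).continuousAt.continuousWithinAt)
    rw [interior_Ico]
    exact fun u hu => hd u hu.1 hu.2
  intro u hu1 hu2
  have := hmono ⟨le_refl 0, hε⟩ ⟨hu1.le, hu2⟩ hu1
  rwa [hf0] at this

/-- The Wente ODE system with parameter `ahat`, for twice differentiable `y`, `z`: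
`y'' = (ahat−1)y − 2y(y²−z²)`, `z'' = ahat·z − 2z(y²−z²)`. -/
def WenteSystem (ahat : ℝ) (y z : ℝ → ℝ) : Prop :=
  (∀ u : ℝ, DifferentiableAt ℝ y u) ∧ (∀ u : ℝ, DifferentiableAt ℝ (deriv y) u) ∧
  (∀ u : ℝ, DifferentiableAt ℝ z u) ∧ (∀ u : ℝ, DifferentiableAt ℝ (deriv z) u) ∧
  (∀ u : ℝ, deriv (deriv y) u = (ahat - 1) * y u - 2 * y u * ((y u) ^ 2 - (z u) ^ 2)) ∧
  (∀ u : ℝ, deriv (deriv z) u = ahat * z u - 2 * z u * ((y u) ^ 2 - (z u) ^ 2))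

theorem y_below_z_outside_free_boundary_region (a b c : ℝ)
    (ha : 1 ≤ a) (hba : a ≤ b) (hc : 1 < c)
    (A B C : ℝ) (hA : A = (a + 1/a)/2) (hB : B = (b + 1/b)/2) (hC : C = (c - 1/c)/2)
    (hW : C ^ 2 ≤ (A - B) ^ 2 / (4 * A * B))
    (y z : ℝ → ℝ)
    (hsys : WenteSystem (1 - A * B + C ^ 2) y z)
    (hy0 : y 0 = 0) (hz0 : z 0 = 0)
    (hy'0 : deriv y 0 = (A + B) * C / 2)
    (hz'0 : deriv z 0 = (B - A) * Real.sqrt (C ^ 2 + 1) / 2) :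
    ∃ ε : ℝ, 0 < ε ∧ ∀ u : ℝ, 0 < u → u < ε → y u < z u := by
  obtain ⟨hyd, hy'd, hzd, hz'd, hyode, hzode⟩ := hsys
  set ahat : ℝ := 1 - A * B + C ^ 2 with hahat
  have ha0 : 0 < a := lt_of_lt_of_le one_pos ha
  have hb0 : 0 < b := lt_of_lt_of_le one_pos (ha.trans hba)
  have hc0 : 0 < c := lt_trans one_pos hc
  have hApos : 0 < A := by rw [hA]; positivity
  have hBpos : 0 < B := by rw [hB]; positivity
  have hCpos : 0 < C := by
    rw [hC]
    have h1 : 1/c < c := by rw [div_lt_iff₀ hc0]; nlinarith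
    linarith
  have hAB : A ≤ B := by
    rw [hA, hB]
    have hab : (1:ℝ) ≤ a * b := by nlinarith
    have key : 1/a - 1/b = (b - a)/(a*b) := by field_simp
    have h2 : (b - a)/(a*b) ≤ b - a := div_le_self (by linarith) hab
    have h3 : 1/a - 1/b ≤ b - a := by rw [key]; exact h2
    linarith
  -- the difference function
  set w : ℝ → ℝ := fun u => z u - y u with hwdef
  have hwd : ∀ u, DifferentiableAt ℝ w u := fun u => (hzd u).sub (hyd u)
  have hw0 : w 0 = 0 := by simp [hwdef, hy0, hz0]
  have hw' : ∀ u, deriv w u = deriv z u - deriv y u := fun u => deriv_sub (hzd u) (hyd u)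
  have hw'fun : deriv w = fun u => deriv z u - deriv y u := funext hw'
  have hw'd : ∀ u, DifferentiableAt ℝ (deriv w) u := by
    rw [hw'fun]; exact fun u => (hz'd u).sub (hy'd u)
  have hw'' : ∀ u, deriv (deriv w) u =
      ahat * z u - (ahat - 1) * y u - 2 * (z u - y u) * ((y u)^2 - (z u)^2) := by
    intro u
    rw [hw'fun]
    rw [deriv_fun_sub (hz'd u) (hy'd u), hzode u, hyode u]
    ring
  -- sign of w'(0)
  set s : ℝ := Real.sqrt (C ^ 2 + 1) with hs
  have hs0 : 0 ≤ s := Real.sqrt_nonneg _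
  have hssq : s ^ 2 = C ^ 2 + 1 := Real.sq_sqrt (by positivity)
  have h4AB : 4 * A * B * C ^ 2 ≤ (A - B) ^ 2 := by
    have := (div_le_div_iff₀ (by norm_num : (0:ℝ) < 1) (by positivity : 0 < 4 * A * B)).mp
      (by simpa using hW)
    nlinarith [hW, mul_pos hApos hBpos]
  have hkey : (A + B) * C ≤ (B - A) * s := by
    have hnn2 : 0 ≤ (A + B) * C := by positivity
    have hnn : 0 ≤ (B - A) * s := mul_nonneg (by linarith) hs0
    have hsq : ((A + B) * C) ^ 2 ≤ ((B - A) * s) ^ 2 := by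
      have : ((B - A) * s) ^ 2 = (B - A)^2 * (C^2 + 1) := by rw [mul_pow, hssq]
      nlinarith [h4AB]
    calc (A + B) * C = Real.sqrt (((A + B) * C) ^ 2) := (Real.sqrt_sq hnn2).symm
      _ ≤ Real.sqrt (((B - A) * s) ^ 2) := Real.sqrt_le_sqrt hsq
      _ = (B - A) * s := Real.sqrt_sq hnn
  have hw'0 : deriv w 0 = (B - A) * s / 2 - (A + B) * C / 2 := by
    rw [hw' 0, hz'0, hy'0]
  have hw'0nn : 0 ≤ deriv w 0 := by rw [hw'0]; linarith
  rcases eq_or_lt_of_le hw'0nn with heq | hlt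
  · -- degenerate case: w'(0) = 0, use third derivative
    have hzy : deriv z 0 = deriv y 0 := by have := hw' 0; linarith [heq.symm ▸ this]
    have hv : 0 < deriv z 0 := by rw [hzy, hy'0]; positivity
    have hyH : HasDerivAt y (deriv y 0) 0 := (hyd 0).hasDerivAt
    have hzH : HasDerivAt z (deriv z 0) 0 := (hzd 0).hasDerivAt
    have hF := ((hzH.const_mul ahat).sub (hyH.const_mul (ahat - 1))).sub
      (((hzH.sub hyH).mul ((hyH.pow 2).sub (hzH.pow 2))).const_mul 2)
    have hF' : HasDerivAt
        (fun u => ahat * z u - (ahat - 1) * y u - 2 * (z u - y u) * ((y u)^2 - (z u)^2))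
        (deriv z 0) 0 := by
      refine (hF.congr_of_eventuallyEq (Filter.Eventually.of_forall fun u => ?_)).congr_deriv ?_
      · simp only [Pi.sub_apply, Pi.mul_apply, Pi.pow_apply]; ring
      · simp only [Pi.sub_apply, Pi.pow_apply, hy0, hz0, hzy]; ring
    have hwFfun : deriv (deriv w) =
        fun u => ahat * z u - (ahat - 1) * y u - 2 * (z u - y u) * ((y u)^2 - (z u)^2) :=
      funext hw''
    have hw''H : HasDerivAt (deriv (deriv w)) (deriv z 0) 0 := by rw [hwFfun]; exact hF'
    have hw''0 : deriv (deriv w) 0 = 0 := by rw [hw'' 0, hy0, hz0]; ring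
    obtain ⟨ε, hε, h1⟩ := aux_pos_right (deriv (deriv w)) hw''0 hv hw''H
    have h2 : ∀ u : ℝ, 0 < u → u < ε → 0 < deriv w u :=
      aux_pos_of_deriv_pos (deriv w) hw'd heq.symm ε hε h1
    have h3 : ∀ u : ℝ, 0 < u → u < ε → 0 < w u :=
      aux_pos_of_deriv_pos w hwd hw0 ε hε h2
    exact ⟨ε, hε, fun u hu1 hu2 => sub_pos.mp (h3 u hu1 hu2)⟩
  · -- generic case: w'(0) > 0
    obtain ⟨ε, hε, h1⟩ := aux_pos_right w hw0 hlt (hwd 0).hasDerivAt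
    exact ⟨ε, hε, fun u hu1 hu2 => sub_pos.mp (h1 u hu1 hu2)⟩
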